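/- Let ω > 0 and t ∈ ℝ. Then the Feynman-prescription energy integral has the limit lim_{δ → 0⁺} (1/2π) ∫_ℝ e^{−i t E} / (ω² − E² − i δ) dE = i · e^{−i |t| ω} / (2ω), where for each δ > 0 the integrand is Lebesgue integrable on ℝ. -/

import Mathlib

open MeasureTheory Filter

open Set Complex FourierTransform

lemma aux_integrableOn_cexp_Ioi {c : ℂ} (hc : c.re < 0) :
    IntegrableOn (fun x : ℝ => Complex.exp (c * x)) (Set.Ioi (0:ℝ)) := by
  apply Integrable.mono' (g := fun x => Real.exp (-(-c.re) * x))
    (exp_neg_integrableOn_Ioi 0 (by linarith))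
  · exact (Complex.continuous_exp.comp
      (continuous_const.mul Complex.continuous_ofReal)).aestronglyMeasurable.restrict
  · filter_upwards [] with x
    simp [Complex.norm_exp, Complex.mul_re]

lemma aux_integral_cexp_Ioi {c : ℂ} (hc : c.re < 0) :
    ∫ x in Set.Ioi (0:ℝ), Complex.exp (c * x) = -c⁻¹ := by
  have hc0 : c ≠ 0 := fun h => by simp [h] at hc
  have D : ∀ x : ℝ, HasDerivAt (fun y : ℝ => Complex.exp (c * y) / c) (Complex.exp (c * x)) x := by
    intro x
    conv => congr
    rw [← mul_div_cancel_right₀ (Complex.exp (c * x)) hc0]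
    apply ((Complex.hasDerivAt_exp _).comp x _).div_const c
    simpa only [mul_one, id] using ((hasDerivAt_id (x : ℂ)).const_mul _).comp_ofReal
  have hlim : Tendsto (fun y : ℝ => Complex.exp (c * y) / c) atTop (nhds 0) := by
    rw [tendsto_zero_iff_norm_tendsto_zero]
    have : Tendsto (fun y : ℝ => Real.exp (c.re * y) / ‖c‖) atTop (nhds 0) := by
      have h1 : Tendsto (fun y : ℝ => c.re * y) atTop atBot :=
        Tendsto.const_mul_atTop_of_neg hc tendsto_id
      simpa using (Real.tendsto_exp_atBot.comp h1).div_const ‖c‖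
    refine this.congr fun y => ?_
    rw [norm_div]
    congr 1
    simp [Complex.norm_exp, Complex.mul_re]
  have := integral_Ioi_of_hasDerivAt_of_tendsto' (fun x _ => D x)
    (aux_integrableOn_cexp_Ioi hc) hlim
  rw [this]
  rw [Complex.ofReal_zero, mul_zero, Complex.exp_zero]
  ring

lemma aux_integrable_exp_abs {b : ℝ} (hb : b < 0) :
    Integrable (fun x : ℝ => Real.exp (b * |x|)) := by
  have hIoi : IntegrableOn (fun x : ℝ => Real.exp (b * |x|)) (Set.Ioi 0) := by
    refine ((exp_neg_integrableOn_Ioi 0 (b := -b) (by linarith)).congr_fun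
      (fun x hx => ?_) measurableSet_Ioi)
    rw [abs_of_pos hx]; ring_nf
  have int_Iic : IntegrableOn (fun x : ℝ => Real.exp (b * |x|)) (Set.Iic 0) := by
    rw [← Measure.map_neg_eq_self (volume : Measure ℝ)]
    have m : MeasurableEmbedding fun x : ℝ => -x := (Homeomorph.neg ℝ).measurableEmbedding
    rw [m.integrableOn_map_iff]
    simp_rw [Function.comp_def, abs_neg, Set.neg_preimage, Set.neg_Iic, neg_zero]
    exact Iff.mpr integrableOn_Ici_iff_integrableOn_Ioi hIoi
  rw [← integrableOn_univ, ← Set.Iic_union_Ioi (a := (0:ℝ))]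
  exact int_Iic.union hIoi

lemma aux_norm_integrand {z : ℂ} (w x : ℝ) :
    ‖Complex.exp (-I * z * |x|) * Complex.exp (-I * w * x)‖ = Real.exp (z.im * |x|) := by
  simp [Complex.norm_exp, Complex.mul_re, Complex.mul_im]

lemma aux_integrable_mul {z : ℂ} (hz : z.im < 0) (w : ℝ) :
    Integrable (fun s : ℝ => Complex.exp (-I * z * |s|) * Complex.exp (-I * w * s)) := by
  refine (aux_integrable_exp_abs hz).mono' ?_ ?_
  · apply Continuous.aestronglyMeasurable
    fun_prop
  · filter_upwards [] with x
    rw [aux_norm_integrand]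

lemma aux_integral_mul {z : ℂ} (hz : z.im < 0) (w : ℝ) :
    ∫ s : ℝ, Complex.exp (-I * z * |s|) * Complex.exp (-I * w * s)
      = -2 * I * z / (z ^ 2 - (w:ℂ) ^ 2) := by
  have hint := aux_integrable_mul hz w
  have hzw : z + (w:ℂ) ≠ 0 := fun h => by
    have := congrArg Complex.im h; simp at this; exact hz.ne this
  have hzw' : z - (w:ℂ) ≠ 0 := fun h => by
    have := congrArg Complex.im h; simp at this; exact hz.ne this
  have hden : z ^ 2 - (w:ℂ) ^ 2 ≠ 0 := by
    rw [sq_sub_sq]; exact mul_ne_zero hzw hzw'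
  rw [← intervalIntegral.integral_Iic_add_Ioi hint.integrableOn hint.integrableOn]
  have hIic : (∫ s in Set.Iic (0:ℝ), Complex.exp (-I * z * |s|) * Complex.exp (-I * w * s))
      = ∫ s in Set.Ioi (0:ℝ), Complex.exp ((-I * (z - w)) * s) := by
    have := integral_comp_neg_Ioi (0:ℝ)
      (fun s : ℝ => Complex.exp (-I * z * |s|) * Complex.exp (-I * w * s))
    rw [neg_zero] at this
    rw [← this]
    refine setIntegral_congr_fun measurableSet_Ioi fun x hx => ?_
    rw [abs_neg, abs_of_pos hx, ← Complex.exp_add, Complex.ofReal_neg]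
    congr 1
    ring
  have hIoi : (∫ s in Set.Ioi (0:ℝ), Complex.exp (-I * z * |s|) * Complex.exp (-I * w * s))
      = ∫ s in Set.Ioi (0:ℝ), Complex.exp ((-I * (z + w)) * s) := by
    refine setIntegral_congr_fun measurableSet_Ioi fun x hx => ?_
    rw [abs_of_pos hx, ← Complex.exp_add]
    congr 1
    ring
  have hre1 : ((-I) * (z - w)).re < 0 := by
    simpa [Complex.mul_re] using hz
  have hre2 : ((-I) * (z + w)).re < 0 := by
    simpa [Complex.mul_re] using hz
  rw [hIic, hIoi, aux_integral_cexp_Ioi hre1, aux_integral_cexp_Ioi hre2]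
  have h3 : Complex.I ^ 3 = -Complex.I := by
    rw [pow_succ, Complex.I_sq]; ring
  field_simp
  ring_nf
  rw [Complex.I_sq]
  ring

lemma aux_ne_zero {v : ℂ} (hv : v.im ≠ 0) (E : ℝ) : v - (E:ℂ)^2 ≠ 0 := by
  intro h
  have := congrArg Complex.im h
  simp [← Complex.ofReal_pow] at this
  exact hv this

lemma aux_integrable_inv {v : ℂ} (hv : v.im ≠ 0) :
    Integrable (fun E : ℝ => (v - (E:ℂ)^2)⁻¹) := by
  have hC2 : (0:ℝ) < |v.im| := abs_pos.mpr hv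
  set C : ℝ := max 2 ((3 + 2*|v.re|)/|v.im|) with hC
  refine (integrable_inv_one_add_sq.const_mul C).mono' ?_ ?_
  · apply Continuous.aestronglyMeasurable
    exact ((continuous_const.sub ((Complex.continuous_ofReal.pow 2))).inv₀
      (fun E => aux_ne_zero hv E))
  · filter_upwards [] with E
    rw [norm_inv]
    have h1 : (0:ℝ) < 1 + E^2 := by positivity
    have hnorm : (0:ℝ) < ‖v - (E:ℂ)^2‖ := norm_pos_iff.mpr (aux_ne_zero hv E)
    have hre0 : (v - (E:ℂ)^2).re = v.re - E^2 := by simp [← Complex.ofReal_pow]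
    have him0 : (v - (E:ℂ)^2).im = v.im := by simp [← Complex.ofReal_pow]
    rw [inv_le_iff_one_le_mul₀ hnorm]
    have key : 1 + E^2 ≤ C * ‖v - (E:ℂ)^2‖ := by
      rcases le_or_gt (2*|v.re| + 2) (E^2) with hE | hE
      · have h2 : (1 + E^2)/2 ≤ ‖v - (E:ℂ)^2‖ := by
          have hre : E^2 - v.re ≤ |(v - (E:ℂ)^2).re| := by
            rw [hre0, abs_sub_comm]
            exact le_abs_self _
          have h3 : (1+E^2)/2 ≤ E^2 - v.re := by nlinarith [le_abs_self v.re]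
          refine le_trans h3 (le_trans hre ?_)
          exact Complex.abs_re_le_norm _
        calc 1 + E^2 = 2 * ((1+E^2)/2) := by ring
          _ ≤ C * ‖v - (E:ℂ)^2‖ :=
            mul_le_mul (le_max_left _ _) h2 (by positivity) (by positivity)
      · have h2 : |v.im| ≤ ‖v - (E:ℂ)^2‖ := by
          rw [← him0]
          exact Complex.abs_im_le_norm _
        calc 1 + E^2 ≤ 3 + 2*|v.re| := by nlinarith [abs_nonneg v.re]
          _ = (3 + 2*|v.re|)/|v.im| * |v.im| := by field_simp
          _ ≤ C * ‖v - (E:ℂ)^2‖ := by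
            apply mul_le_mul (le_max_right _ _) h2 (by positivity) ?_
            exact le_trans (by positivity) (le_max_left 2 _)
    calc (1:ℝ) = (1+E^2) * (1+E^2)⁻¹ := by field_simp
      _ ≤ (C * ‖v - (E:ℂ)^2‖) * (1+E^2)⁻¹ := mul_le_mul_of_nonneg_right key (by positivity)
      _ = C * (1+E^2)⁻¹ * ‖v - (E:ℂ)^2‖ := by ring

lemma aux_z_sq {v : ℂ} (hv0 : v ≠ 0) : (v ^ (1/2:ℂ)) ^ 2 = v := by
  rw [sq, ← Complex.cpow_add _ _ hv0]
  norm_num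

lemma aux_z_im {v : ℂ} (him : v.im < 0) : (v ^ (1/2:ℂ)).im < 0 := by
  have hv0 : v ≠ 0 := fun h => by simp [h] at him
  rw [Complex.cpow_def_of_ne_zero hv0, Complex.exp_im]
  apply mul_neg_of_pos_of_neg (Real.exp_pos _)
  have him2 : (Complex.log v * (1/2:ℂ)).im = v.arg / 2 := by
    simp [Complex.mul_im, Complex.log_im]
    ring
  rw [him2]
  have h1 : v.arg < 0 := Complex.arg_neg_iff.mpr him
  have h2 : -Real.pi < v.arg := Complex.neg_pi_lt_arg v
  apply Real.sin_neg_of_neg_of_neg_pi_lt (by linarith)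
  linarith [Real.pi_pos]

lemma aux_key (ω : ℝ) (hω : 0 < ω) (t : ℝ) {δ : ℝ} (hδ : 0 < δ) :
    Integrable (fun E : ℝ =>
        Complex.exp (-Complex.I * t * E) / ((ω : ℂ) ^ 2 - (E : ℂ) ^ 2 - Complex.I * δ)) ∧
    (1 / (2 * (Real.pi : ℂ))) *
        (∫ E : ℝ, Complex.exp (-Complex.I * t * E) / ((ω : ℂ) ^ 2 - (E : ℂ) ^ 2 - Complex.I * δ))
      = Complex.I * Complex.exp (-Complex.I * (((ω:ℂ)^2 - Complex.I * δ) ^ (1/2:ℂ)) * |t|)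
          / (2 * ((ω:ℂ)^2 - Complex.I * δ) ^ (1/2:ℂ)) := by
  set v : ℂ := (ω:ℂ)^2 - Complex.I * δ with hv
  have him : v.im = -δ := by
    rw [hv]; simp [← Complex.ofReal_pow]
  have him' : v.im ≠ 0 := by rw [him]; exact neg_ne_zero.mpr hδ.ne'
  have hv0 : v ≠ 0 := fun h => him' (by rw [h]; rfl)
  set z : ℂ := v ^ (1/2:ℂ) with hzdef
  have hz2 : z ^ 2 = v := aux_z_sq hv0
  have hzim : z.im < 0 := aux_z_im (by rw [him]; linarith)
  have hz0 : z ≠ 0 := fun h => hv0 (by rw [← hz2, h]; ring)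
  -- integrability of the main integrand
  have hfun : (fun E : ℝ => Complex.exp (-Complex.I * t * E) /
      ((ω : ℂ) ^ 2 - (E : ℂ) ^ 2 - Complex.I * δ))
      = fun E : ℝ => Complex.exp (-Complex.I * t * E) * (v - (E:ℂ)^2)⁻¹ := by
    funext E
    rw [div_eq_mul_inv, hv]
    ring_nf
  have hint : Integrable (fun E : ℝ => Complex.exp (-Complex.I * t * E) /
      ((ω : ℂ) ^ 2 - (E : ℂ) ^ 2 - Complex.I * δ)) := by
    rw [hfun]
    refine (aux_integrable_inv him').bdd_mul (c := 1) ?_ (Filter.Eventually.of_forall fun E => ?_)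
    · apply Continuous.aestronglyMeasurable
      fun_prop
    · rw [Complex.norm_exp]
      simp [Complex.mul_re]
  refine ⟨hint, ?_⟩
  -- the auxiliary function and its Fourier transform
  set g : ℝ → ℂ := fun s => Complex.I / (2*z) * Complex.exp (-Complex.I * z * |s|) with hg
  have hg_int : Integrable g := by
    have h0 : Integrable (fun s : ℝ => Complex.exp (-Complex.I * z * |s|)) := by
      have := aux_integrable_mul hzim 0
      simpa using this
    exact h0.const_mul _
  have hg_cont : Continuous g := by
    apply continuous_const.mul
    fun_prop
  have hF : ∀ ξ : ℝ, 𝓕 g ξ = (v - ((2*Real.pi*ξ :ℝ):ℂ)^2)⁻¹ := by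
    intro ξ
    have hden : z^2 - ((2*Real.pi*ξ :ℝ):ℂ)^2 ≠ 0 := by
      rw [hz2]; exact aux_ne_zero him' _
    calc 𝓕 g ξ = ∫ s : ℝ, Complex.exp (↑(-2 * Real.pi * s * ξ) * Complex.I) • g s :=
          Real.fourier_real_eq_integral_exp_smul g ξ
      _ = ∫ s : ℝ, Complex.I / (2*z) *
            (Complex.exp (-Complex.I * z * |s|) *
              Complex.exp (-Complex.I * ((2*Real.pi*ξ :ℝ):ℂ) * s)) := by
          refine integral_congr_ae (Filter.Eventually.of_forall fun s => ?_)
          dsimp only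
          rw [smul_eq_mul, hg]
          have hA : (↑(-2 * Real.pi * s * ξ) : ℂ) * Complex.I
              = -Complex.I * ((2*Real.pi*ξ :ℝ):ℂ) * s := by push_cast; ring
          rw [hA]
          ring
      _ = Complex.I / (2*z) * (-2 * Complex.I * z / (z^2 - ((2*Real.pi*ξ :ℝ):ℂ)^2)) := by
          rw [integral_const_mul, aux_integral_mul hzim (2*Real.pi*ξ)]
      _ = (v - ((2*Real.pi*ξ :ℝ):ℂ)^2)⁻¹ := by
          have h2z : (2:ℂ) * z ≠ 0 := mul_ne_zero two_ne_zero hz0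
          rw [← hz2, div_mul_div_comm,
            show Complex.I * (-2 * Complex.I * z) = 2 * z from by
              linear_combination (-2*z) * Complex.I_sq,
            div_eq_mul_inv, mul_inv, ← mul_assoc, mul_inv_cancel₀ h2z, one_mul]
  have hFint : Integrable (𝓕 g) := by
    have : 𝓕 g = fun ξ : ℝ => (fun E : ℝ => (v - (E:ℂ)^2)⁻¹) ((2*Real.pi) * ξ) := by
      funext ξ
      rw [hF ξ]
    rw [this]
    exact (aux_integrable_inv him').comp_mul_left' (by positivity)
  have hinv : 𝓕⁻ (𝓕 g) t = g t := hg_int.fourierInv_fourier_eq hFint hg_cont.continuousAt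
  -- rewrite the inverse Fourier integral as our integral
  set h : ℝ → ℂ := fun E => Complex.exp (-Complex.I * t * E) /
      ((ω : ℂ) ^ 2 - (E : ℂ) ^ 2 - Complex.I * δ) with hh
  have hptwise : ∀ ξ : ℝ, Complex.exp (↑(-2 * Real.pi * ξ * (-t)) * Complex.I) • 𝓕 g ξ
      = h (-(2*Real.pi) * ξ) := by
    intro ξ
    rw [hF ξ, smul_eq_mul, hh]
    simp only []
    rw [div_eq_mul_inv]
    congr 1
    · congr 1; push_cast; ring
    · congr 1; rw [hv]; push_cast; ring
  have hstep : g t = (2*Real.pi)⁻¹ • ∫ E : ℝ, h E := by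
    rw [← hinv, Real.fourierInv_eq_fourier_neg,
      Real.fourier_real_eq_integral_exp_smul]
    rw [integral_congr_ae (Filter.Eventually.of_forall hptwise)]
    rw [Measure.integral_comp_mul_left h (-(2*Real.pi))]
    have habs : |(-(2 * Real.pi))⁻¹| = (2*Real.pi)⁻¹ := by
      rw [abs_inv, abs_neg, abs_of_pos (by positivity)]
    rw [habs]
  have : (1 / (2 * (Real.pi : ℂ))) * (∫ E : ℝ, h E) = g t := by
    rw [hstep, Complex.real_smul]
    push_cast
    ring
  rw [hh] at this
  rw [this, hg]
  simp only []
  rw [hzdef]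
  ring

/-- the Feynman-prescription energy integral: for `ω > 0` and `t ∈ ℝ`,
the integrand `E ↦ e^{−itE}/(ω² − E² − iδ)` is integrable for every `δ > 0`, and
`(1/2π) ∫ e^{−itE}/(ω² − E² − iδ) dE → i e^{−i|t|ω}/(2ω)` as `δ → 0⁺`. -/
theorem feynman_prescription_limit (ω : ℝ) (hω : 0 < ω) (t : ℝ) :
    (∀ δ : ℝ, 0 < δ →
        Integrable (fun E : ℝ =>
          Complex.exp (-Complex.I * t * E) / ((ω : ℂ) ^ 2 - (E : ℂ) ^ 2 - Complex.I * δ))) ∧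
      Tendsto (fun δ : ℝ =>
          (1 / (2 * (Real.pi : ℂ))) *
            ∫ E : ℝ, Complex.exp (-Complex.I * t * E) /
              ((ω : ℂ) ^ 2 - (E : ℂ) ^ 2 - Complex.I * δ))
        (nhdsWithin 0 (Set.Ioi 0))
        (nhds (Complex.I * Complex.exp (-Complex.I * |t| * ω) / (2 * ω))) := by
  refine ⟨fun δ hδ => (aux_key ω hω t hδ).1, ?_⟩
  have hω0 : ((ω:ℂ)) ≠ 0 := by exact_mod_cast hω.ne'
  set Φ : ℂ → ℂ := fun z => Complex.I * Complex.exp (-Complex.I * z * (|t|:ℝ)) / (2 * z)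
    with hΦ
  have hΦcont : ContinuousAt Φ (ω:ℂ) := by
    apply ContinuousAt.div
    · fun_prop
    · fun_prop
    · exact mul_ne_zero two_ne_zero hω0
  have hval : ((ω:ℂ)^2) ^ ((1:ℂ)/2) = (ω:ℂ) := by
    rw [show ((ω:ℂ))^2 = ((ω^2:ℝ):ℂ) from by push_cast; ring,
      show ((1:ℂ)/2) = (((1/2:ℝ)):ℂ) from by norm_num,
      ← Complex.ofReal_cpow (by positivity)]
    rw [← Real.sqrt_eq_rpow, Real.sqrt_sq hω.le]
  have hbase : Tendsto (fun δ : ℝ => (ω:ℂ)^2 - Complex.I * δ) (nhdsWithin 0 (Set.Ioi 0))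
      (nhds ((ω:ℂ)^2)) := by
    have hc : Continuous (fun δ : ℝ => (ω:ℂ)^2 - Complex.I * δ) := by fun_prop
    have := (hc.tendsto 0).mono_left (nhdsWithin_le_nhds (s := Set.Ioi (0:ℝ)))
    simpa using this
  have hslit : ((ω:ℂ)^2) ∈ Complex.slitPlane := by
    rw [Complex.mem_slitPlane_iff]
    left
    simp [← Complex.ofReal_pow]
    positivity
  have hcpow : ContinuousAt (fun w : ℂ => w ^ ((1:ℂ)/2)) ((ω:ℂ)^2) :=
    continuousAt_cpow_const hslit
  have hz_tendsto : Tendsto (fun δ : ℝ => ((ω:ℂ)^2 - Complex.I * δ) ^ ((1:ℂ)/2))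
      (nhdsWithin 0 (Set.Ioi 0)) (nhds (ω:ℂ)) := by
    have := hcpow.tendsto.comp hbase
    rwa [hval] at this
  have hΦlim : Tendsto (fun δ : ℝ => Φ (((ω:ℂ)^2 - Complex.I * δ) ^ ((1:ℂ)/2)))
      (nhdsWithin 0 (Set.Ioi 0))
      (nhds (Complex.I * Complex.exp (-Complex.I * |t| * ω) / (2 * ω))) := by
    have h2 := hΦcont.tendsto.comp hz_tendsto
    have hΦω : Φ (ω:ℂ) = Complex.I * Complex.exp (-Complex.I * |t| * ω) / (2 * ω) := by
      rw [hΦ]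
      simp only []
      rw [show -Complex.I * (ω:ℂ) * ((|t|:ℝ):ℂ) = -Complex.I * ((|t|:ℝ):ℂ) * (ω:ℂ) from by ring]
    rwa [hΦω] at h2
  refine Tendsto.congr' ?_ hΦlim
  filter_upwards [self_mem_nhdsWithin] with δ hδ
  have := (aux_key ω hω t hδ).2
  rw [hΦ]
  simp only []
  rw [← this]
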